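/- Let Θ = {t·q : t ≥ 0, q ∈ Ξ} ⊆ ℝ³ where Ξ = {(1, z₂, z₃) : z₂⁴ ≤ z₃ ≤ 1}, and let z̄ = (1, 0, 0) ∈ Θ. Then the normal cone of convex analysis to Θ at z̄ is N_Θ(z̄) = {0} × {0} × ℝ₋. -/

import Mathlib

open Filter Topology Set RealInnerProductSpace
noncomputable section

/-- Normal cone of convex analysis. -/
def normalCone {E : Type*} [NormedAddCommGroup E] [InnerProductSpace ℝ E]
    (Ω : Set E) (z : E) : Set E :=
  {v | ∀ w ∈ Ω, ⟪v, w - z⟫ ≤ 0}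

/-- The generator set `Ξ = {(1, z₂, z₃) : z₂⁴ ≤ z₃ ≤ 1}`. -/
def Xi : Set (EuclideanSpace ℝ (Fin 3)) :=
  {z | z 0 = 1 ∧ (z 1) ^ 4 ≤ z 2 ∧ z 2 ≤ 1}

/-- The cone generated by `Ξ`. -/
def Th : Set (EuclideanSpace ℝ (Fin 3)) :=
  {z | ∃ t : ℝ, 0 ≤ t ∧ ∃ q ∈ Xi, z = t • q}

lemma inner_comp (v : EuclideanSpace ℝ (Fin 3)) (t a b : ℝ) :
    ⟪v, t • (!₂[1, a, b] : EuclideanSpace ℝ (Fin 3)) - (!₂[1,0,0] : EuclideanSpace ℝ (Fin 3))⟫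
      = v 0 * (t - 1) + v 1 * (t * a) + v 2 * (t * b) := by
  simp [PiLp.inner_apply, Fin.sum_univ_three, RCLike.inner_apply]; ring

lemma mem_Xi (a b : ℝ) (hab : a ^ 4 ≤ b) (hb : b ≤ 1) :
    (!₂[1, a, b] : EuclideanSpace ℝ (Fin 3)) ∈ Xi := by
  refine ⟨?_, ?_, ?_⟩ <;> simp [Matrix.cons_val_one, Matrix.head_cons] <;> assumption

/-- `N_Θ((1,0,0)) = {0} × {0} × ℝ₋`. -/
theorem normalCone_Th (zb : EuclideanSpace ℝ (Fin 3)) (hzb : zb = !₂[1, 0, 0]) :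
    normalCone Th zb = {v | v 0 = 0 ∧ v 1 = 0 ∧ v 2 ≤ 0} := by
  subst hzb
  ext v
  simp only [normalCone, Set.mem_setOf_eq]
  constructor
  · intro h
    have key : ∀ t a b : ℝ, 0 ≤ t → a ^ 4 ≤ b → b ≤ 1 →
        v 0 * (t - 1) + v 1 * (t * a) + v 2 * (t * b) ≤ 0 := by
      intro t a b ht hab hb1
      have := h (t • (!₂[1, a, b] : EuclideanSpace ℝ (Fin 3)))
        ⟨t, ht, !₂[1, a, b], mem_Xi a b hab hb1, rfl⟩
      rwa [inner_comp] at this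
    have h0 : v 0 = 0 := by
      have h1 := key 0 0 0 le_rfl (by norm_num) (by norm_num)
      have h2 := key 2 0 0 (by norm_num) (by norm_num) (by norm_num)
      nlinarith
    have h2 : v 2 ≤ 0 := by
      have := key 1 0 1 (by norm_num) (by norm_num) le_rfl
      nlinarith
    have h1 : v 1 = 0 := by
      by_contra hne
      set A := |v 1| with hA
      have hApos : 0 < A := abs_pos.mpr hne
      set c := -(v 2) with hc
      have hcnn : 0 ≤ c := by simp [hc]; linarith
      set ε := min 1 (A / (A + c)) with hε
      have hεpos : 0 < ε := lt_min one_pos (div_pos hApos (by linarith))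
      have hε1 : ε ≤ 1 := min_le_left _ _
      have hε2 : ε ≤ A / (A + c) := min_le_right _ _
      have habs : ε ^ 4 ≤ 1 := pow_le_one₀ hεpos.le hε1
      have k1 := key 1 ε (ε ^ 4) (by norm_num) (by norm_num) habs
      have k2 := key 1 (-ε) (ε ^ 4) (by norm_num) (le_of_eq (by ring)) habs
      rw [h0] at k1 k2
      -- |v 1| * ε ≤ c * ε^4
      have hAε : A * ε ≤ c * ε ^ 4 := by
        rcases abs_cases (v 1) with ⟨he, _⟩ | ⟨he, _⟩ <;> rw [hA, he] <;> nlinarith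
      have hεle : ε * (A + c) ≤ A := by
        have := (le_div_iff₀ (by linarith : (0:ℝ) < A + c)).mp hε2
        linarith [this]
      have hd : A ≤ c * ε ^ 3 := by
        have h' : A * ε ≤ (c * ε ^ 3) * ε := by nlinarith [hAε]
        exact le_of_mul_le_mul_right h' hεpos
      have h3 : ε ^ 3 ≤ ε := by
        calc ε ^ 3 ≤ ε ^ 1 := pow_le_pow_of_le_one hεpos.le hε1 (by norm_num)
        _ = ε := pow_one ε
      nlinarith [mul_le_mul_of_nonneg_left h3 hcnn, mul_pos hApos hεpos]
    exact ⟨h0, h1, h2⟩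
  · rintro ⟨h0, h1, h2⟩ w ⟨t, ht, q, ⟨hq0, hq1, hq2⟩, rfl⟩
    have hq1' : 0 ≤ q 2 := le_trans (by positivity) hq1
    simp only [PiLp.inner_apply, RCLike.inner_apply, conj_trivial, Fin.sum_univ_three,
      PiLp.sub_apply, PiLp.smul_apply, smul_eq_mul, Matrix.cons_val_zero,
      Matrix.cons_val_one, Matrix.head_cons, Matrix.cons_val_two, Matrix.tail_cons]
    rw [h0, h1]
    have : v 2 * (t * q 2) ≤ 0 :=
      mul_nonpos_of_nonpos_of_nonneg h2 (mul_nonneg ht hq1')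
    nlinarith
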